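/- Let T be a C² map of the circle ℝ/ℤ with |T'(x)| > 1 and |T''(x)/T'(x)²| ≤ D for all x, and let λ = sup_x 1/|T'(x)|. Let L be the transfer operator: (L f)(x) = Σ_{y : T(y) = x} f(y)/|T'(y)| (a finite sum, since T is an expanding covering map of the circle). Then for every Lipschitz function f : ℝ/ℤ → ℝ, Lip(L f) ≤ (2D + 1) λ · Lip(f) + D(D+1) ‖f‖_{L¹}. -/

import Mathlib

open Set MeasureTheory

/-- The least Lipschitz constant of a function `f : ℝ → ℝ`. For a `1`-periodic
function this coincides with the least Lipschitz constant of the induced function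
on the circle `ℝ/ℤ` with its standard metric. -/
noncomputable def lipConst (f : ℝ → ℝ) : ℝ :=
  sInf {c | 0 ≤ c ∧ ∀ x y, |f x - f y| ≤ c * |x - y|}


set_option maxHeartbeats 1000000

open intervalIntegral

lemma le_of_forall_le_add_div (a b C : ℝ) (hC : 0 ≤ C)
    (h : ∀ N : ℕ, 0 < N → a ≤ b + C / N) : a ≤ b := by
  by_contra hab
  push_neg at hab
  obtain ⟨N, hN⟩ := exists_nat_gt (max 1 (C / (a - b)))
  have hN1 : (1:ℝ) < N := lt_of_le_of_lt (le_max_left _ _) hN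
  have hN0 : 0 < N := by exact_mod_cast lt_trans zero_lt_one hN1
  have hNr : (0:ℝ) < N := by exact_mod_cast hN0
  have h2 := h N hN0
  have h3 : C / (a - b) < N := lt_of_le_of_lt (le_max_right _ _) hN
  have h4 : C / N < a - b := by
    rw [div_lt_iff₀ hNr]
    rw [div_lt_iff₀ (by linarith : (0:ℝ) < a - b)] at h3
    linarith [h3]
  linarith

/-- Key integral lemma: a two-point estimate with quadratic slop integrates. -/
lemma key_integral (F φ : ℝ → ℝ) (hφc : Continuous φ) (Lφ K : ℝ)
    (hLφ : 0 ≤ Lφ) (hK : 0 ≤ K)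
    (hφlip : ∀ a b, |φ a - φ b| ≤ Lφ * |a - b|)
    (hF : ∀ v u : ℝ, v ≤ u → |F u - F v| ≤ φ v * (u - v) + K * (u - v)^2) :
    ∀ v u : ℝ, v ≤ u → |F u - F v| ≤ ∫ t in v..u, φ t := by
  intro v u hvu
  apply le_of_forall_le_add_div _ _ ((K + Lφ) * (u - v)^2) (by positivity)
  intro N hN
  set δ : ℝ := (u - v) / N with hδ
  have hN0' : (0:ℝ) < N := by exact_mod_cast hN
  have hδ0 : 0 ≤ δ := div_nonneg (by linarith) hN0'.le
  set s : ℕ → ℝ := fun i => v + i * δ with hs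
  have hsucc : ∀ i : ℕ, s (i+1) - s i = δ := by
    intro i; simp only [hs]; push_cast; ring
  have hs0 : s 0 = v := by simp [hs]
  have hsN : s N = u := by
    simp only [hs, hδ]; field_simp; ring
  have htel : F u - F v = ∑ i ∈ Finset.range N, (F (s (i+1)) - F (s i)) := by
    rw [Finset.sum_range_sub (fun i => F (s i)) N, hs0, hsN]
  have hstep : ∀ i : ℕ, |F (s (i+1)) - F (s i)| ≤
      (∫ t in (s i)..(s (i+1)), φ t) + (K + Lφ) * δ^2 := by
    intro i
    have h1 : |F (s (i+1)) - F (s i)| ≤ φ (s i) * δ + K * δ^2 := by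
      have := hF (s i) (s (i+1)) (by nlinarith [hsucc i])
      rwa [hsucc i] at this
    have h2 : φ (s i) * δ ≤ (∫ t in (s i)..(s (i+1)), φ t) + Lφ * δ^2 := by
      have hle : s i ≤ s (i+1) := by nlinarith [hsucc i]
      have hconst : ∫ t in (s i)..(s (i+1)), (φ (s i) - Lφ * δ) = φ (s i) * δ - Lφ * δ^2 := by
        rw [intervalIntegral.integral_const, smul_eq_mul, hsucc i]; ring
      have hmono : ∫ t in (s i)..(s (i+1)), (φ (s i) - Lφ * δ) ≤
          ∫ t in (s i)..(s (i+1)), φ t := by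
        apply integral_mono_on hle (by simp) (hφc.intervalIntegrable _ _)
        intro t ht
        have := hφlip (s i) t
        have habs : |s i - t| ≤ δ := by
          rw [abs_of_nonpos (by linarith [ht.1])]
          have := ht.2; have := hsucc i; linarith
        have : |φ (s i) - φ t| ≤ Lφ * δ :=
          le_trans this (by nlinarith)
        have := abs_le.1 this
        linarith [this.1]
      nlinarith [hconst, hmono]
    calc |F (s (i+1)) - F (s i)| ≤ φ (s i) * δ + K * δ^2 := h1
    _ ≤ (∫ t in (s i)..(s (i+1)), φ t) + Lφ * δ^2 + K * δ^2 := by linarith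
    _ = (∫ t in (s i)..(s (i+1)), φ t) + (K + Lφ) * δ^2 := by ring
  have hsum : ∑ i ∈ Finset.range N, ∫ t in (s i)..(s (i+1)), φ t = ∫ t in v..u, φ t := by
    rw [show (∫ t in v..u, φ t) = ∫ t in (s 0)..(s N), φ t by rw [hs0, hsN]]
    exact sum_integral_adjacent_intervals (fun k _ => hφc.intervalIntegrable _ _)
  calc |F u - F v| = |∑ i ∈ Finset.range N, (F (s (i+1)) - F (s i))| := by rw [htel]
  _ ≤ ∑ i ∈ Finset.range N, |F (s (i+1)) - F (s i)| := Finset.abs_sum_le_sum_abs _ _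
  _ ≤ ∑ i ∈ Finset.range N, ((∫ t in (s i)..(s (i+1)), φ t) + (K + Lφ) * δ^2) :=
      Finset.sum_le_sum (fun i _ => hstep i)
  _ = (∫ t in v..u, φ t) + N * ((K + Lφ) * δ^2) := by
      rw [Finset.sum_add_distrib, hsum, Finset.sum_const, Finset.card_range]; push_cast; ring
  _ ≤ (∫ t in v..u, φ t) + (K + Lφ) * (u - v)^2 / N := by
      have : (N:ℝ) * ((K + Lφ) * δ^2) = (K + Lφ) * (u-v)^2 / N := by
        rw [hδ]; field_simp
      rw [this]

theorem main_inc
    (T : ℝ → ℝ) (d : ℤ)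
    (hTlift : ∀ x, T (x + 1) = T x + d)
    (hTC2 : ContDiff ℝ 2 T)
    (hTexp : ∀ x, 1 < |deriv T x|)
    (D : ℝ)
    (hTdist : ∀ x, |deriv (deriv T) x / (deriv T x) ^ 2| ≤ D)
    (lam : ℝ) (hlam : lam = ⨆ x : ℝ, 1 / |deriv T x|)
    (L : (ℝ → ℝ) → ℝ → ℝ)
    (hL : ∀ f x, L f x =
      ∑ᶠ y ∈ {y : ℝ | y ∈ Ico (0 : ℝ) 1 ∧ ∃ n : ℤ, T y = x + n}, f y / |deriv T y|)
    (f : ℝ → ℝ)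
    (hfper : Function.Periodic f 1)
    (hfLip : ∃ c : ℝ, 0 ≤ c ∧ ∀ x y, |f x - f y| ≤ c * |x - y|)
    (hinc : ∀ x, 1 < deriv T x) :
    lipConst (L f) ≤
      (2 * D + 1) * lam * lipConst f + D * (D + 1) * ∫ x in Ico (0 : ℝ) 1, |f x| := by
  -- basic facts
  have hTd : Differentiable ℝ T := hTC2.differentiable two_ne_zero
  have hT'cont : Continuous (deriv T) := hTC2.continuous_deriv one_le_two
  have hT'pos : ∀ x, 0 < deriv T x := fun x => lt_trans one_pos (hinc x)
  have hT'ne : ∀ x, deriv T x ≠ 0 := fun x => ne_of_gt (hT'pos x)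
  have hmono : StrictMono T := strictMono_of_deriv_pos (fun x => hT'pos x)
  have hD0 : 0 ≤ D := le_trans (abs_nonneg _) (hTdist 0)
  -- d > 1
  have hT1 : T 1 = T 0 + d := by simpa using hTlift 0
  have hd1 : (1:ℝ) < (d:ℝ) := by
    obtain ⟨c, _, hc⟩ := exists_hasDerivAt_eq_slope T (deriv T) one_pos
      (hTd.continuous.continuousOn) (fun x _ => (hTd x).hasDerivAt)
    rw [hT1] at hc
    simp at hc
    rw [← hc]
    exact hinc c
  -- lift for integers
  have lift_int : ∀ (x : ℝ) (n : ℤ), T (x + n) = T x + n * d := by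
    intro x n
    induction n using Int.induction_on with
    | zero => simp
    | succ k ih => push_cast; push_cast at ih
                   rw [show x + ((k:ℝ) + 1) = (x + k) + 1 by ring, hTlift, ih]; ring
    | pred k ih => push_cast; push_cast at ih
                   have h := hTlift (x + (-(k:ℝ) - 1))
                   rw [show x + (-(k:ℝ) - 1) + 1 = x + -(k:ℝ) by ring] at h
                   linarith [h, ih]
  -- surjectivity
  have hsurj : Function.Surjective T := by
    intro y
    obtain ⟨n, hn⟩ := exists_nat_ge (|y - T 0|)
    have habs := abs_le.1 hn
    have hTn : T ((n:ℤ):ℝ) = T 0 + n * d := by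
      have := lift_int 0 (n:ℤ); push_cast at this ⊢; simpa using this
    have hTmn : T (-((n:ℤ):ℝ)) = T 0 - n * d := by
      have h := lift_int 0 (-(n:ℤ)); push_cast at h ⊢
      rw [show -(n:ℝ) = 0 + -(n:ℝ) by ring]; linarith [h]
    have hnd : (n:ℝ) ≤ n * d := by nlinarith [hd1, Nat.cast_nonneg (α := ℝ) n]
    have h1 : T (-((n:ℤ):ℝ)) ≤ y := by rw [hTmn]; push_cast; linarith [habs.1]
    have h2 : y ≤ T ((n:ℤ):ℝ) := by rw [hTn]; push_cast; linarith [habs.2]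
    have : y ∈ Icc (T (-((n:ℤ):ℝ))) (T ((n:ℤ):ℝ)) := ⟨h1, h2⟩
    obtain ⟨x, _, hx⟩ := intermediate_value_Icc (by push_cast; linarith [Nat.cast_nonneg (α := ℝ) n] : -((n:ℤ):ℝ) ≤ ((n:ℤ):ℝ)) (hTd.continuous.continuousOn) this
    exact ⟨x, hx⟩
  -- the inverse map S
  set E := StrictMono.orderIsoOfSurjective T hmono hsurj with hE
  set S : ℝ → ℝ := fun y => E.symm y with hS
  have hTS : ∀ u, T (S u) = u := fun u => StrictMono.orderIsoOfSurjective_self_symm_apply T hmono hsurj u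
  have hST : ∀ y, S (T y) = y := fun y => StrictMono.orderIsoOfSurjective_symm_apply_self T hmono hsurj y
  have hScont : Continuous S := OrderIso.continuous E.symm
  have hSmono : StrictMono S := E.symm.strictMono
  have hSinj : Function.Injective S := hSmono.injective
  -- g = S'
  set g : ℝ → ℝ := fun u => (deriv T (S u))⁻¹ with hg
  have hSd : ∀ u, HasDerivAt S (g u) u := by
    intro u
    exact HasDerivAt.of_local_left_inverse (hScont.continuousAt)
      ((hTd (S u)).hasDerivAt) (hT'ne (S u)) (Filter.Eventually.of_forall hTS)
  have hgcont : Continuous g := ((hT'cont.comp hScont).inv₀ (fun u => hT'ne (S u)))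
  have hgpos : ∀ u, 0 < g u := fun u => inv_pos.2 (hT'pos (S u))
  -- lam facts
  have hbdd : BddAbove (Set.range (fun x => 1 / |deriv T x|)) := by
    refine ⟨1, ?_⟩
    rintro y ⟨x, rfl⟩
    have := hTexp x
    rw [div_le_one (by linarith [abs_nonneg (deriv T x)])]
    linarith
  have hglam : ∀ u, g u ≤ lam := by
    intro u
    rw [hlam]
    have : g u = 1 / |deriv T (S u)| := by
      rw [hg, abs_of_pos (hT'pos (S u)), one_div]
    rw [this]
    exact le_ciSup hbdd (S u)
  have hlam0 : 0 < lam := lt_of_lt_of_le (hgpos 0) (hglam 0)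
  -- psi lipschitz: |(deriv T a)⁻¹ - (deriv T b)⁻¹| ≤ D |a - b|
  have hT'd : Differentiable ℝ (deriv T) := by
    have h2 : ContDiff ℝ (1+1 : WithTop ℕ∞) T := by
      have : (1+1 : WithTop ℕ∞) = 2 := by norm_num
      rw [this]; exact hTC2
    rw [contDiff_succ_iff_deriv] at h2
    exact h2.2.2.differentiable one_ne_zero
  have hψ : ∀ a b : ℝ, |(deriv T a)⁻¹ - (deriv T b)⁻¹| ≤ D * |a - b| := by
    intro a b
    have hd : ∀ x ∈ (Set.univ : Set ℝ), HasDerivWithinAt (fun y => (deriv T y)⁻¹)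
        (-(deriv (deriv T) x) / (deriv T x)^2) Set.univ x := by
      intro x _
      exact (((hT'd x).hasDerivAt).inv (hT'ne x)).hasDerivWithinAt
    have hb : ∀ x ∈ (Set.univ : Set ℝ), ‖-(deriv (deriv T) x) / (deriv T x)^2‖ ≤ D := by
      intro x _
      rw [Real.norm_eq_abs, neg_div, abs_neg]
      exact hTdist x
    have := Convex.norm_image_sub_le_of_norm_hasDerivWithin_le hd hb convex_univ
      (Set.mem_univ b) (Set.mem_univ a)
    simpa [Real.norm_eq_abs] using this
  have hglip' : ∀ a b, |g a - g b| ≤ D * |S a - S b| := fun a b => hψ (S a) (S b)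
  have hSlip : ∀ a b, |S a - S b| ≤ lam * |a - b| := by
    intro a b
    have := Convex.norm_image_sub_le_of_norm_hasDerivWithin_le
      (fun x (_ : x ∈ (Set.univ : Set ℝ)) => (hSd x).hasDerivWithinAt)
      (fun x _ => by rw [Real.norm_eq_abs, abs_of_pos (hgpos x)]; exact hglam x)
      convex_univ (Set.mem_univ b) (Set.mem_univ a)
    simpa [Real.norm_eq_abs] using this
  have hglip : ∀ a b, |g a - g b| ≤ D * lam * |a - b| := by
    intro a b
    calc |g a - g b| ≤ D * |S a - S b| := hglip' a b
    _ ≤ D * (lam * |a - b|) := mul_le_mul_of_nonneg_left (hSlip a b) hD0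
    _ = D * lam * |a - b| := by ring
  have hSint : ∀ v u : ℝ, S u - S v = ∫ t in v..u, g t := by
    intro v u
    rw [intervalIntegral.integral_eq_sub_of_hasDerivAt (fun t _ => hSd t)
      (hgcont.intervalIntegrable _ _)]
  have hSd_per : ∀ u : ℝ, S (u + d) = S u + 1 := by
    intro u
    apply hmono.injective
    rw [hTS, hTlift, hTS]
  have hT'per : ∀ x, deriv T (x + 1) = deriv T x := by
    intro x
    have hfun : (fun y => T (y + 1)) = fun y => T y + d := funext hTlift
    have h1 : deriv (fun y => T (y + 1)) x = deriv T (x + 1) := by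
      rw [deriv_comp_add_const]
    rw [hfun] at h1
    rw [← h1, deriv_add_const]
  have hg_per : ∀ u, g (u + d) = g u := by
    intro u
    rw [hg]
    simp only
    rw [hSd_per, hT'per]
  -- integer cast facts
  have hd1' : 1 ≤ d := by exact_mod_cast hd1.le
  set dn : ℕ := d.toNat with hdn
  have hdnd : (dn : ℤ) = d := Int.toNat_of_nonneg (by omega)
  have hdnR : (dn : ℝ) = (d : ℝ) := by exact_mod_cast congrArg (fun z : ℤ => (z:ℝ)) hdnd
  have hdn1 : 1 ≤ dn := by omega
  -- the branch sum functions
  set q : ℝ → ℝ := fun u => f (S u) * g u with hq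
  set G : ℝ → ℝ := fun x => ∑ i ∈ Finset.range dn, g (x + i) with hG
  set Hh : ℝ → ℝ := fun x => ∑ i ∈ Finset.range dn, |f (S (x + i))| * g (x + i) with hHh
  set Φ : ℝ → ℝ := fun x => ∑ i ∈ Finset.range dn, q (x + i) with hΦ
  -- periodicity of the pieces
  have hfSper : ∀ u : ℝ, f (S (u + dn)) = f (S u) := by
    intro u
    rw [hdnR, hSd_per, hfper (S u)]
  have hgper' : ∀ u : ℝ, g (u + dn) = g u := by
    intro u; rw [hdnR, hg_per]
  have hqper : ∀ u : ℝ, q (u + dn) = q u := by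
    intro u; rw [hq]; simp only; rw [hfSper, hgper']
  -- shift lemma
  have hshift : ∀ (p : ℝ → ℝ), (∀ u, p (u + dn) = p u) → ∀ x : ℝ,
      ∑ i ∈ Finset.range dn, p (x + 1 + i) = ∑ i ∈ Finset.range dn, p (x + i) := by
    intro p hp x
    have h1 : ∑ i ∈ Finset.range dn, p (x + 1 + i)
        = ∑ i ∈ Finset.range dn, p (x + ((i+1 : ℕ) : ℝ)) := by
      refine Finset.sum_congr rfl fun i _ => ?_
      congr 1; push_cast; ring
    rw [h1]
    have h2 := Finset.sum_range_succ' (fun i : ℕ => p (x + i)) dn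
    have h3 := Finset.sum_range_succ (fun i : ℕ => p (x + i)) dn
    have h4 : p (x + (dn : ℝ)) = p (x + ((0:ℕ):ℝ)) := by
      rw [hp x]
      congr 1
      norm_num
    push_cast at h2 h3 h4 ⊢
    linarith [h2, h3, h4]
  have hshiftZ : ∀ (p : ℝ → ℝ), (∀ u, p (u + dn) = p u) → ∀ (m : ℤ) (x : ℝ),
      ∑ i ∈ Finset.range dn, p (x + m + i) = ∑ i ∈ Finset.range dn, p (x + i) := by
    intro p hp m
    induction m using Int.induction_on with
    | zero => intro x; norm_num
    | succ k ih =>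
      intro x
      have e1 : ∑ i ∈ Finset.range dn, p (x + ((k:ℤ)+1 : ℤ) + i)
          = ∑ i ∈ Finset.range dn, p ((x + (k:ℤ)) + 1 + i) := by
        refine Finset.sum_congr rfl fun i _ => ?_; congr 1 <;> (push_cast; try ring)
      rw [e1, hshift p hp (x + (k:ℤ))]
      exact ih x
    | pred k ih =>
      intro x
      have e0 := hshift p hp (x + (-(k:ℤ)-1 : ℤ))
      have e1 : ∑ i ∈ Finset.range dn, p ((x + (-(k:ℤ)-1 : ℤ)) + 1 + i)
          = ∑ i ∈ Finset.range dn, p (x + (-(k:ℤ) : ℤ) + i) := by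
        refine Finset.sum_congr rfl fun i _ => ?_; congr 1 <;> (push_cast; try ring)
      have e2 : ∑ i ∈ Finset.range dn, p ((x + (-(k:ℤ)-1 : ℤ)) + i)
          = ∑ i ∈ Finset.range dn, p (x + (-(k:ℤ)-1 : ℤ) + i) := by
        refine Finset.sum_congr rfl fun i _ => ?_; congr 1 <;> (push_cast; try ring)
      rw [e1, ih x] at e0
      rw [← e2, e0]
  -- main identity : L f = Φ
  have hLx : ∀ x, L f x = Φ x := by
    intro x
    rw [hL]
    set r : ℝ := T 0 - x with hr
    set n₀ : ℤ := ⌈r⌉ with hn₀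
    have setEq : {y : ℝ | y ∈ Ico (0 : ℝ) 1 ∧ ∃ n : ℤ, T y = x + n}
        = (fun i : ℕ => S (x + n₀ + i)) '' ↑(Finset.range dn) := by
      ext y
      constructor
      · rintro ⟨⟨hy0, hy1⟩, n, hn⟩
        have hyS : y = S (x + n) := by rw [← hn, hST]
        have hTy0 : T 0 ≤ x + n := by rw [← hn]; exact hmono.monotone hy0
        have hTy1 : x + (n:ℝ) < T 0 + d := by
          rw [← hn, ← hT1]; exact hmono hy1
        have hn0 : n₀ ≤ n := by
          rw [hn₀]
          apply Int.ceil_le.mpr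
          rw [hr]; linarith
        have hnlt : n < n₀ + d := by
          have h5 : (n:ℝ) < r + d := by rw [hr]; linarith
          have h6 : r ≤ (n₀ : ℝ) := Int.le_ceil r
          exact_mod_cast lt_of_lt_of_le h5 (by linarith : r + (d:ℝ) ≤ (n₀:ℝ) + (d:ℝ))
        refine ⟨(n - n₀).toNat, ?_, ?_⟩
        · simp only [Finset.coe_range, Set.mem_Iio]
          omega
        · simp only
          rw [hyS]
          congr 1
          have hc : ((n - n₀).toNat : ℝ) = (n:ℝ) - (n₀:ℝ) := by
            have := Int.toNat_of_nonneg (by omega : (0:ℤ) ≤ n - n₀)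
            exact_mod_cast congrArg (fun z : ℤ => (z:ℝ)) this
          rw [hc]; ring
      · rintro ⟨i, hi, rfl⟩
        simp only [Finset.coe_range, Set.mem_Iio] at hi
        have hin : (i : ℤ) < d := by omega
        have hrn : r ≤ (n₀ : ℝ) := Int.le_ceil r
        have hrn1 : (n₀ : ℝ) < r + 1 := Int.ceil_lt_add_one r
        constructor
        · constructor
          · have h7 : T 0 ≤ x + n₀ + i := by
              rw [hr] at hrn
              have : (0:ℝ) ≤ (i:ℝ) := Nat.cast_nonneg i
              linarith
            calc (0:ℝ) = S (T 0) := (hST 0).symm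
            _ ≤ S (x + n₀ + i) := hSmono.monotone h7
          · have h8 : x + (n₀:ℝ) + i < T 1 := by
              rw [hT1]
              have h9 : (i:ℝ) ≤ (dn:ℝ) - 1 := by
                have : (i:ℝ) + 1 ≤ (dn:ℝ) := by exact_mod_cast Nat.succ_le_of_lt hi
                linarith
              rw [hr] at hrn1
              rw [← hdnR]
              linarith
            calc S (x + n₀ + i) < S (T 1) := hSmono h8
            _ = 1 := hST 1
        · refine ⟨n₀ + i, ?_⟩
          rw [hTS]; push_cast; ring
    rw [setEq, ← Finset.coe_image, finsum_mem_coe_finset]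
    rw [Finset.sum_image (by
      intro i _ j _ hij
      have := hSinj hij
      have : (i:ℝ) = (j:ℝ) := by linarith [this]
      exact_mod_cast this)]
    have hsummand : ∀ i ∈ Finset.range dn,
        f (S (x + n₀ + i)) / |deriv T (S (x + n₀ + i))| = q ((x + n₀) + i) := by
      intro i _
      rw [hq]
      simp only
      rw [abs_of_pos (hT'pos _), div_eq_mul_inv]
    rw [Finset.sum_congr rfl hsummand]
    exact hshiftZ q hqper n₀ x
  -- f continuity and Lipschitz facts
  obtain ⟨c₀, hc₀0, hc₀⟩ := hfLip
  have hfcont : Continuous f := by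
    have hlw : LipschitzWith (Real.toNNReal c₀) f := by
      apply LipschitzWith.of_dist_le_mul
      intro a b
      rw [Real.dist_eq, Real.dist_eq, Real.coe_toNNReal c₀ hc₀0]
      exact hc₀ a b
    exact hlw.continuous
  set c : ℝ := lipConst f with hcdef
  have hne : {c | 0 ≤ c ∧ ∀ x y, |f x - f y| ≤ c * |x - y|}.Nonempty := ⟨c₀, hc₀0, hc₀⟩
  have hc0 : 0 ≤ c := le_csInf hne (fun b hb => hb.1)
  have hcf : ∀ a b : ℝ, |f a - f b| ≤ c * |a - b| := by
    intro a b
    rcases eq_or_ne a b with rfl | hab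
    · simp
    · have habs : 0 < |a - b| := abs_pos.2 (sub_ne_zero.2 hab)
      have hcle : |f a - f b| / |a - b| ≤ c := by
        apply le_csInf hne
        intro b' hb'
        rw [div_le_iff₀ habs]
        exact hb'.2 a b
      calc |f a - f b| = |f a - f b| / |a - b| * |a - b| := by field_simp
      _ ≤ c * |a - b| := mul_le_mul_of_nonneg_right hcle habs.le
  set Mf : ℝ := |f 0| + c with hMf
  have hfbound : ∀ y, |f y| ≤ Mf := by
    intro y
    have h1 : f y = f (Int.fract y) := by
      rw [Int.fract, show y - ↑⌊y⌋ = y - ↑⌊y⌋ * (1:ℝ) by ring]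
      exact (hfper.sub_int_mul_eq (x := y) ⌊y⌋).symm
    have h2 : |Int.fract y| < 1 := by
      rw [abs_of_nonneg (Int.fract_nonneg y)]; exact Int.fract_lt_one y
    calc |f y| = |f (Int.fract y)| := by rw [h1]
    _ ≤ |f (Int.fract y) - f 0| + |f 0| := by
        have := abs_sub_abs_le_abs_sub (f (Int.fract y)) (f 0); linarith [abs_abs (f 0)]
    _ ≤ c * |Int.fract y - 0| + |f 0| := by linarith [hcf (Int.fract y) 0]
    _ ≤ c * 1 + |f 0| := by
        have : |Int.fract y - 0| ≤ 1 := by rw [sub_zero]; exact h2.le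
        nlinarith
    _ = Mf := by rw [hMf]; ring
  -- continuity of the sums
  have hcomp_cont : ∀ i : ℕ, Continuous (fun t : ℝ => t + (i:ℝ)) :=
    fun i => continuous_id.add continuous_const
  have hGcont : Continuous G := by
    rw [hG]; exact continuous_finset_sum _ (fun i _ => hgcont.comp (hcomp_cont i))
  have hwabs : Continuous (fun u : ℝ => |f (S u)| * g u) :=
    ((hfcont.comp hScont).abs.mul hgcont)
  have hHcont : Continuous Hh := by
    rw [hHh]; exact continuous_finset_sum _ (fun i _ => hwabs.comp (hcomp_cont i))
  have hqcont : Continuous q := by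
    rw [hq]; exact (hfcont.comp hScont).mul hgcont
  have hΦcont : Continuous Φ := by
    rw [hΦ]; exact continuous_finset_sum _ (fun i _ => hqcont.comp (hcomp_cont i))
  -- integral identities
  have hsum_int : ∀ (p : ℝ → ℝ), Continuous p → ∀ x : ℝ,
      (∫ t in x..(x+1), ∑ i ∈ Finset.range dn, p (t + i)) = ∫ t in x..(x + (dn:ℝ)), p t := by
    intro p hp x
    have hfs := intervalIntegral.integral_finset_sum (μ := volume) (a := x) (b := x+1)
      (f := fun (i : ℕ) (t : ℝ) => p (t + (i:ℝ))) (s := Finset.range dn)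
      (fun i _ => ((show Continuous fun t : ℝ => p (t + (i:ℝ)) from
        hp.comp (hcomp_cont i)).intervalIntegrable _ _))
    rw [hfs]
    have h1 : ∀ i ∈ Finset.range dn, (∫ t in x..(x+1), p (t + i))
        = ∫ t in (x + i)..(x + i + 1), p t := by
      intro i _
      rw [intervalIntegral.integral_comp_add_right]
      congr 1
      ring
    rw [Finset.sum_congr rfl h1]
    have h2 := intervalIntegral.sum_integral_adjacent_intervals
      (a := fun i : ℕ => x + i) (n := dn) (f := p) (μ := volume)
      (fun k _ => hp.intervalIntegrable _ _)
    have h3 : ∀ i ∈ Finset.range dn, (∫ t in (x + i)..(x + i + 1), p t)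
        = ∫ t in (x + i)..(x + ((i+1:ℕ):ℝ)), p t := by
      intro i _; congr 1; push_cast; ring
    rw [Finset.sum_congr rfl h3]
    rw [h2]
    norm_num
  have hSdn : ∀ x : ℝ, S (x + (dn:ℝ)) = S x + 1 := by
    intro x; rw [hdnR, hSd_per]
  have hcov : ∀ (w : ℝ → ℝ), Continuous w → ∀ x : ℝ,
      (∫ u in x..(x + (dn:ℝ)), w (S u) * g u) = ∫ t in (S x)..(S x + 1), w t := by
    intro w hw x
    have h1 := intervalIntegral.integral_comp_smul_deriv
      (f := S) (f' := g) (g := w) (a := x) (b := x + (dn:ℝ))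
      (fun u _ => hSd u) hgcont.continuousOn hw
    rw [hSdn] at h1
    rw [← h1]
    apply intervalIntegral.integral_congr
    intro u _
    simp only [smul_eq_mul, Function.comp_apply]
    ring
  have habsper : Function.Periodic (fun t => |f t|) 1 := fun t => by simp [hfper t]
  set I1 : ℝ := ∫ x in Ico (0:ℝ) 1, |f x| with hI1
  have hI1' : I1 = ∫ t in (0:ℝ)..(0+1:ℝ), |f t| := by
    rw [hI1, intervalIntegral.integral_of_le (by norm_num : (0:ℝ) ≤ 0+1)]
    rw [MeasureTheory.integral_Ico_eq_integral_Ioo, MeasureTheory.integral_Ioc_eq_integral_Ioo]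
    norm_num
  have hI10 : 0 ≤ I1 := by
    rw [hI1]
    apply MeasureTheory.integral_nonneg
    intro t; exact abs_nonneg _
  have hintH : ∀ x : ℝ, (∫ t in x..(x+1), Hh t) = I1 := by
    intro x
    have e : (∫ t in x..(x+1), Hh t)
        = ∫ t in x..(x+1), ∑ i ∈ Finset.range dn, |f (S (t + i))| * g (t + i) := by
      simp only [hHh]
    rw [e, hsum_int (fun u => |f (S u)| * g u) hwabs x,
        hcov (fun t => |f t|) hfcont.abs x,
        habsper.intervalIntegral_add_eq (S x) 0, ← hI1']
  have hintG : ∀ x : ℝ, (∫ t in x..(x+1), G t) = 1 := by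
    intro x
    have e : (∫ t in x..(x+1), G t)
        = ∫ t in x..(x+1), ∑ i ∈ Finset.range dn, g (t + i) := by
      simp only [hG]
    rw [e, hsum_int g hgcont x, show (∫ t in x..(x+(dn:ℝ)), g t) = S (x+(dn:ℝ)) - S x from
      (hSint x (x+(dn:ℝ))).symm, hSdn]
    ring
  -- nonnegativity of sums
  have hG0 : ∀ t, 0 ≤ G t := by
    intro t; rw [hG]
    exact Finset.sum_nonneg (fun i _ => (hgpos _).le)
  have hH0 : ∀ t, 0 ≤ Hh t := by
    intro t; rw [hHh]
    exact Finset.sum_nonneg (fun i _ => mul_nonneg (abs_nonneg _) (hgpos _).le)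
  have hMf0 : 0 ≤ Mf := add_nonneg (abs_nonneg _) hc0
  have hlam0' : 0 ≤ lam := hlam0.le
  -- branch facts
  have hSnn : ∀ a b : ℝ, a ≤ b → 0 ≤ S b - S a := fun a b h => by
    have := hSmono.monotone h; linarith
  have hbranch : ∀ a b : ℝ, a ≤ b → S b - S a ≤ (g a + D * lam * (b - a)) * (b - a) := by
    intro a b hab
    rw [hSint a b]
    have hmono2 : (∫ t in a..b, g t) ≤ ∫ t in a..b, (g a + D * lam * (b - a)) := by
      apply intervalIntegral.integral_mono_on hab (hgcont.intervalIntegrable _ _)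
        (intervalIntegrable_const)
      intro t ht
      have h5 := hglip t a
      have h6 : |t - a| ≤ b - a := by
        rw [abs_of_nonneg (by linarith [ht.1] : (0:ℝ) ≤ t - a)]
        linarith [ht.2]
      have h7 := (abs_le.1 h5).2
      have h8 : D * lam * |t - a| ≤ D * lam * (b - a) :=
        mul_le_mul_of_nonneg_left h6 (mul_nonneg hD0 hlam0')
      linarith
    rw [intervalIntegral.integral_const, smul_eq_mul] at hmono2
    nlinarith [hmono2]
  have hgd : ∀ a b : ℝ, a ≤ b → |g b - g a| ≤ D * (S b - S a) := by
    intro a b hab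
    have h1 := hglip' b a
    rw [abs_of_nonneg (hSnn a b hab)] at h1
    exact h1
  -- the combined two-point estimate
  set K0 : ℝ := (dn:ℝ) * (c * D * lam * lam + Mf * D * D * lam) with hK0
  have hK00 : 0 ≤ K0 := by
    apply mul_nonneg (Nat.cast_nonneg dn)
    have t1 : 0 ≤ c * D * lam * lam :=
      mul_nonneg (mul_nonneg (mul_nonneg hc0 hD0) hlam0') hlam0'
    have t2 : 0 ≤ Mf * D * D * lam :=
      mul_nonneg (mul_nonneg (mul_nonneg hMf0 hD0) hD0) hlam0'
    linarith
  have hkey2 : ∀ (w : ℝ → ℝ), (∀ a b, |w a - w b| ≤ c * |a - b|) → (∀ y, |w y| ≤ Mf) →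
      ∀ v u : ℝ, v ≤ u →
      |(∑ i ∈ Finset.range dn, w (S (u + i)) * g (u + i))
       - ∑ i ∈ Finset.range dn, w (S (v + i)) * g (v + i)|
      ≤ (c * lam * G v + D * (∑ i ∈ Finset.range dn, |w (S (v + i))| * g (v + i))) * (u - v)
        + K0 * (u - v)^2 := by
    intro w hwlip hwbd v u hvu
    have hh0 : 0 ≤ u - v := by linarith
    rw [← Finset.sum_sub_distrib]
    refine le_trans (Finset.abs_sum_le_sum_abs _ _) ?_
    have hterm : ∀ i ∈ Finset.range dn,
        |w (S (u + i)) * g (u + i) - w (S (v + i)) * g (v + i)|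
        ≤ (c * lam * g (v + i) + D * (|w (S (v + i))| * g (v + i))) * (u - v)
          + (c * D * lam * lam + Mf * D * D * lam) * (u - v)^2 := by
      intro i _
      set a := v + (i:ℝ) with ha
      set b := u + (i:ℝ) with hb
      have hab : a ≤ b := by rw [ha, hb]; linarith
      have hba : b - a = u - v := by rw [ha, hb]; ring
      have hgb : g b ≤ g a + D * lam * (u - v) := by
        have h5 := (abs_le.1 (hglip b a)).2
        have h6 : |b - a| = u - v := by rw [hba, abs_of_nonneg hh0]
        rw [h6] at h5; linarith
      have hSd2 : S b - S a ≤ (g a + D * lam * (u - v)) * (u - v) := by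
        have := hbranch a b hab; rw [hba] at this; exact this
      have hSd3 : |S b - S a| ≤ lam * (u - v) := by
        have := hSlip b a
        rw [show |b - a| = u - v by rw [hba, abs_of_nonneg hh0]] at this
        exact this
      have hsplit : w (S b) * g b - w (S a) * g a
          = (w (S b) - w (S a)) * g b + w (S a) * (g b - g a) := by ring
      have step1 : |w (S b) * g b - w (S a) * g a|
          ≤ |w (S b) - w (S a)| * g b + |w (S a)| * |g b - g a| := by
        rw [hsplit]
        refine le_trans (abs_add_le _ _) ?_
        rw [abs_mul, abs_mul, abs_of_pos (hgpos b)]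
      have step2 : |w (S b) - w (S a)| * g b ≤ (c * (lam * (u - v))) * (g a + D * lam * (u - v)) := by
        apply mul_le_mul
        · calc |w (S b) - w (S a)| ≤ c * |S b - S a| := hwlip _ _
          _ ≤ c * (lam * (u - v)) := mul_le_mul_of_nonneg_left hSd3 hc0
        · exact hgb
        · exact (hgpos b).le
        · positivity
      have step3 : |w (S a)| * |g b - g a| ≤ |w (S a)| * (D * ((g a + D * lam * (u - v)) * (u - v))) := by
        apply mul_le_mul_of_nonneg_left _ (abs_nonneg _)
        calc |g b - g a| ≤ D * (S b - S a) := hgd a b hab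
        _ ≤ D * ((g a + D * lam * (u - v)) * (u - v)) := mul_le_mul_of_nonneg_left hSd2 hD0
      have hga_lam : g a ≤ lam := hglam a
      have hwa : |w (S a)| ≤ Mf := hwbd _
      have hga0 : 0 ≤ g a := (hgpos a).le
      calc |w (S b) * g b - w (S a) * g a|
          ≤ (c * (lam * (u - v))) * (g a + D * lam * (u - v))
            + |w (S a)| * (D * ((g a + D * lam * (u - v)) * (u - v))) := by
            linarith [step1, step2, step3]
      _ = (c * lam * g a + D * (|w (S a)| * g a)) * (u - v)
            + (c * D * lam * lam + |w (S a)| * D * D * lam) * (u - v)^2 := by ring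
      _ ≤ (c * lam * g a + D * (|w (S a)| * g a)) * (u - v)
            + (c * D * lam * lam + Mf * D * D * lam) * (u - v)^2 := by
            have e1 : |w (S a)| * D * D * lam ≤ Mf * D * D * lam := by
              apply mul_le_mul_of_nonneg_right _ hlam0'
              apply mul_le_mul_of_nonneg_right _ hD0
              exact mul_le_mul_of_nonneg_right hwa hD0
            have e2 : (c * D * lam * lam + |w (S a)| * D * D * lam) * (u - v)^2
                ≤ (c * D * lam * lam + Mf * D * D * lam) * (u - v)^2 :=
              mul_le_mul_of_nonneg_right (by linarith) (sq_nonneg _)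
            linarith
    refine le_trans (Finset.sum_le_sum hterm) ?_
    rw [Finset.sum_add_distrib, Finset.sum_const, Finset.card_range, nsmul_eq_mul]
    have e3 : ∑ i ∈ Finset.range dn,
        (c * lam * g (v + i) + D * (|w (S (v + i))| * g (v + i))) * (u - v)
        = (c * lam * G v + D * (∑ i ∈ Finset.range dn, |w (S (v + i))| * g (v + i))) * (u - v) := by
      rw [← Finset.sum_mul]
      congr 1
      simp only [hG, Finset.sum_add_distrib, Finset.mul_sum]
    rw [e3, hK0]
    exact le_of_eq (by ring)
  -- two-point estimate for G
  have hkeyG : ∀ v u : ℝ, v ≤ u →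
      |G u - G v| ≤ (D * G v) * (u - v) + ((dn:ℝ) * (D * D * lam)) * (u - v)^2 := by
    intro v u hvu
    have hh0 : 0 ≤ u - v := by linarith
    simp only [hG]
    rw [← Finset.sum_sub_distrib]
    refine le_trans (Finset.abs_sum_le_sum_abs _ _) ?_
    have hterm : ∀ i ∈ Finset.range dn, |g (u + i) - g (v + i)|
        ≤ (D * g (v + i)) * (u - v) + (D * D * lam) * (u - v)^2 := by
      intro i _
      have hab : v + (i:ℝ) ≤ u + (i:ℝ) := by linarith
      have h1 := hgd (v + i) (u + i) hab
      have h2 := hbranch (v + i) (u + i) hab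
      rw [show (u + (i:ℝ)) - (v + (i:ℝ)) = u - v by ring] at h2
      calc |g (u + i) - g (v + i)| ≤ D * (S (u + i) - S (v + i)) := h1
      _ ≤ D * ((g (v + i) + D * lam * (u - v)) * (u - v)) := mul_le_mul_of_nonneg_left h2 hD0
      _ = (D * g (v + i)) * (u - v) + (D * D * lam) * (u - v)^2 := by ring
    refine le_trans (Finset.sum_le_sum hterm) ?_
    rw [Finset.sum_add_distrib, Finset.sum_const, Finset.card_range, nsmul_eq_mul,
      ← Finset.sum_mul]
    have e4 : ∑ i ∈ Finset.range dn, D * g (v + i) = D * G v := by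
      simp only [hG]; rw [← Finset.mul_sum]
    rw [e4]
    exact le_of_eq (by ring)
  -- crude Lipschitz bounds for G and Hh
  have hGLip : ∀ a b : ℝ, |G a - G b| ≤ ((dn:ℝ) * (D * lam)) * |a - b| := by
    intro a b
    simp only [hG]
    rw [← Finset.sum_sub_distrib]
    refine le_trans (Finset.abs_sum_le_sum_abs _ _) ?_
    have hterm : ∀ i ∈ Finset.range dn, |g (a + i) - g (b + i)| ≤ (D * lam) * |a - b| := by
      intro i _
      have h1 := hglip (a + i) (b + i)
      rw [show (a + (i:ℝ)) - (b + (i:ℝ)) = a - b by ring] at h1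
      exact le_of_le_of_eq h1 (by ring)
    refine le_trans (Finset.sum_le_sum hterm) ?_
    rw [Finset.sum_const, Finset.card_range, nsmul_eq_mul]
    exact le_of_eq (by ring)
  have hHLip : ∀ a b : ℝ, |Hh a - Hh b|
      ≤ ((dn:ℝ) * (c * lam * lam + Mf * D * lam)) * |a - b| := by
    intro a b
    simp only [hHh]
    rw [← Finset.sum_sub_distrib]
    refine le_trans (Finset.abs_sum_le_sum_abs _ _) ?_
    have hterm : ∀ i ∈ Finset.range dn,
        abs (|f (S (a + i))| * g (a + i) - |f (S (b + i))| * g (b + i))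
        ≤ (c * lam * lam + Mf * D * lam) * |a - b| := by
      intro i _
      have eab : (a + (i:ℝ)) - (b + (i:ℝ)) = a - b := by ring
      have h1 : abs (|f (S (a + i))| - |f (S (b + i))|) ≤ c * (lam * |a - b|) := by
        refine le_trans (abs_abs_sub_abs_le_abs_sub _ _) ?_
        refine le_trans (hcf _ _) ?_
        apply mul_le_mul_of_nonneg_left _ hc0
        have := hSlip (a + i) (b + i)
        rwa [eab] at this
      have h2 : |g (a + i) - g (b + i)| ≤ D * lam * |a - b| := by
        have := hglip (a + i) (b + i)
        rwa [eab] at this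
      have hsplit : |f (S (a + i))| * g (a + i) - |f (S (b + i))| * g (b + i)
          = (|f (S (a + i))| - |f (S (b + i))|) * g (a + i)
            + |f (S (b + i))| * (g (a + i) - g (b + i)) := by ring
      calc abs (|f (S (a + i))| * g (a + i) - |f (S (b + i))| * g (b + i))
          ≤ abs (|f (S (a + i))| - |f (S (b + i))|) * g (a + i)
            + |f (S (b + i))| * |g (a + i) - g (b + i)| := by
            rw [hsplit]
            refine le_trans (abs_add_le _ _) ?_
            rw [abs_mul, abs_mul, abs_of_pos (hgpos _), abs_abs]
      _ ≤ (c * (lam * |a - b|)) * lam + Mf * (D * lam * |a - b|) := by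
            have t1 : abs (|f (S (a + i))| - |f (S (b + i))|) * g (a + i)
                ≤ (c * (lam * |a - b|)) * lam :=
              mul_le_mul h1 (hglam _) (hgpos _).le (by positivity)
            have t2 : |f (S (b + i))| * |g (a + i) - g (b + i)|
                ≤ Mf * (D * lam * |a - b|) :=
              mul_le_mul (hfbound _) h2 (abs_nonneg _) hMf0
            linarith
      _ = (c * lam * lam + Mf * D * lam) * |a - b| := by ring
    refine le_trans (Finset.sum_le_sum hterm) ?_
    rw [Finset.sum_const, Finset.card_range, nsmul_eq_mul]
    exact le_of_eq (by ring)
  -- integrated bounds via key_integral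
  have hDGcont : Continuous (fun t => D * G t) := continuous_const.mul hGcont
  have hGint2 := key_integral G (fun t => D * G t) hDGcont
      (D * ((dn:ℝ) * (D * lam))) ((dn:ℝ) * (D * D * lam))
      (by positivity)
      (by positivity)
      (fun a b => by
        have h1 := hGLip a b
        calc |D * G a - D * G b| = D * |G a - G b| := by
              rw [show D * G a - D * G b = D * (G a - G b) by ring, abs_mul,
                abs_of_nonneg hD0]
        _ ≤ D * (((dn:ℝ) * (D * lam)) * |a - b|) := mul_le_mul_of_nonneg_left h1 hD0
        _ = (D * ((dn:ℝ) * (D * lam))) * |a - b| := by ring)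
      (fun v u hvu => hkeyG v u hvu)
  have hsupG : ∀ x : ℝ, G x ≤ 1 + D := by
    intro x
    have hint : ∀ t ∈ Icc x (x+1), G x ≤ G t + D := by
      intro t ht
      have h1 := hGint2 x t ht.1
      have h2 : (∫ s in x..t, D * G s) ≤ ∫ s in x..(x+1), D * G s := by
        have hadd := intervalIntegral.integral_add_adjacent_intervals
          (hDGcont.intervalIntegrable (μ := volume) x t) (hDGcont.intervalIntegrable (μ := volume) t (x+1))
        have h3 : 0 ≤ ∫ s in t..(x+1), D * G s :=
          intervalIntegral.integral_nonneg ht.2 (fun s _ => mul_nonneg hD0 (hG0 s))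
        linarith
      have h4 : (∫ s in x..(x+1), D * G s) = D := by
        rw [intervalIntegral.integral_const_mul, hintG x, mul_one]
      have h5 := (abs_le.1 h1).1
      linarith
    have h6 : (∫ t in x..(x+1), G x) = G x := by
      rw [intervalIntegral.integral_const, smul_eq_mul]
      try ring
    have h7 : (∫ t in x..(x+1), G x) ≤ ∫ t in x..(x+1), (G t + D) := by
      apply intervalIntegral.integral_mono_on (by linarith) intervalIntegrable_const
        ((hGcont.add continuous_const).intervalIntegrable _ _)
      exact hint
    have h8 : (∫ t in x..(x+1), (G t + D)) = 1 + D := by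
      rw [intervalIntegral.integral_add (hGcont.intervalIntegrable _ _) intervalIntegrable_const,
        hintG x, intervalIntegral.integral_const, smul_eq_mul]
      ring
    linarith
  -- two-point estimate for Hh, integrated
  have hkeyH : ∀ v u : ℝ, v ≤ u →
      |Hh u - Hh v| ≤ (c * lam * G v + D * Hh v) * (u - v) + K0 * (u - v)^2 := by
    intro v u hvu
    have h1 := hkey2 (fun y => |f y|)
      (fun a b => le_trans (abs_abs_sub_abs_le_abs_sub _ _) (hcf a b))
      (fun y => by rw [abs_abs]; exact hfbound y) v u hvu
    simp only [abs_abs] at h1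
    simp only [hHh]
    exact h1
  have hφHcont : Continuous (fun t => c * lam * G t + D * Hh t) :=
    (continuous_const.mul hGcont).add (continuous_const.mul hHcont)
  have hφHlip : ∀ a b : ℝ, |(c * lam * G a + D * Hh a) - (c * lam * G b + D * Hh b)|
      ≤ (c * lam * ((dn:ℝ) * (D * lam)) + D * ((dn:ℝ) * (c * lam * lam + Mf * D * lam))) * |a - b| := by
    intro a b
    have e : (c * lam * G a + D * Hh a) - (c * lam * G b + D * Hh b)
        = c * lam * (G a - G b) + D * (Hh a - Hh b) := by ring
    rw [e]
    refine le_trans (abs_add_le _ _) ?_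
    have t1 : |c * lam * (G a - G b)| ≤ (c * lam) * (((dn:ℝ) * (D * lam)) * |a - b|) := by
      rw [abs_mul, abs_of_nonneg (mul_nonneg hc0 hlam0')]
      exact mul_le_mul_of_nonneg_left (hGLip a b) (mul_nonneg hc0 hlam0')
    have t2 : |D * (Hh a - Hh b)| ≤ D * (((dn:ℝ) * (c * lam * lam + Mf * D * lam)) * |a - b|) := by
      rw [abs_mul, abs_of_nonneg hD0]
      exact mul_le_mul_of_nonneg_left (hHLip a b) hD0
    calc |c * lam * (G a - G b)| + |D * (Hh a - Hh b)|
        ≤ (c * lam) * (((dn:ℝ) * (D * lam)) * |a - b|)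
          + D * (((dn:ℝ) * (c * lam * lam + Mf * D * lam)) * |a - b|) := by linarith
    _ = (c * lam * ((dn:ℝ) * (D * lam)) + D * ((dn:ℝ) * (c * lam * lam + Mf * D * lam))) * |a - b| := by
        ring
  have hHint2 := key_integral Hh (fun t => c * lam * G t + D * Hh t) hφHcont
      (c * lam * ((dn:ℝ) * (D * lam)) + D * ((dn:ℝ) * (c * lam * lam + Mf * D * lam))) K0
      (by
        have t1 : 0 ≤ c * lam * ((dn:ℝ) * (D * lam)) := by
          apply mul_nonneg (mul_nonneg hc0 hlam0')
          apply mul_nonneg (Nat.cast_nonneg dn) (mul_nonneg hD0 hlam0')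
        have t2 : 0 ≤ D * ((dn:ℝ) * (c * lam * lam + Mf * D * lam)) := by
          apply mul_nonneg hD0
          apply mul_nonneg (Nat.cast_nonneg dn)
          have u1 : 0 ≤ c * lam * lam := mul_nonneg (mul_nonneg hc0 hlam0') hlam0'
          have u2 : 0 ≤ Mf * D * lam := mul_nonneg (mul_nonneg hMf0 hD0) hlam0'
          linarith
        linarith)
      hK00 hφHlip (fun v u hvu => hkeyH v u hvu)
  have hsupH : ∀ x : ℝ, Hh x ≤ (1 + D) * I1 + c * lam := by
    intro x
    have hint : ∀ t ∈ Icc x (x+1), Hh x ≤ Hh t + (c * lam + D * I1) := by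
      intro t ht
      have h1 := hHint2 x t ht.1
      have h2 : (∫ s in x..t, (c * lam * G s + D * Hh s))
          ≤ ∫ s in x..(x+1), (c * lam * G s + D * Hh s) := by
        have hadd := intervalIntegral.integral_add_adjacent_intervals
          (hφHcont.intervalIntegrable (μ := volume) x t) (hφHcont.intervalIntegrable (μ := volume) t (x+1))
        have h3 : 0 ≤ ∫ s in t..(x+1), (c * lam * G s + D * Hh s) := by
          apply intervalIntegral.integral_nonneg ht.2
          intro s _
          have := mul_nonneg (mul_nonneg hc0 hlam0') (hG0 s)
          have := mul_nonneg hD0 (hH0 s)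
          linarith
        linarith
      have h4 : (∫ s in x..(x+1), (c * lam * G s + D * Hh s)) = c * lam + D * I1 := by
        rw [intervalIntegral.integral_add (f := fun s => c * lam * G s) (g := fun s => D * Hh s)
          ((continuous_const.mul hGcont : Continuous fun s => c * lam * G s).intervalIntegrable _ _)
          ((continuous_const.mul hHcont : Continuous fun s => D * Hh s).intervalIntegrable _ _),
          intervalIntegral.integral_const_mul, intervalIntegral.integral_const_mul,
          hintG x, hintH x]
        ring
      have h5 := (abs_le.1 h1).1
      linarith
    have h6 : (∫ t in x..(x+1), Hh x) = Hh x := by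
      rw [intervalIntegral.integral_const, smul_eq_mul]
      try ring
    have h7 : (∫ t in x..(x+1), Hh x) ≤ ∫ t in x..(x+1), (Hh t + (c * lam + D * I1)) := by
      apply intervalIntegral.integral_mono_on (by linarith) intervalIntegrable_const
        ((hHcont.add continuous_const).intervalIntegrable _ _)
      exact hint
    have h8 : (∫ t in x..(x+1), (Hh t + (c * lam + D * I1))) = I1 + (c * lam + D * I1) := by
      rw [intervalIntegral.integral_add (hHcont.intervalIntegrable _ _) intervalIntegrable_const,
        hintH x, intervalIntegral.integral_const, smul_eq_mul]
      ring
    nlinarith [h6, h7, h8]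
  -- conclusion
  set B : ℝ := (2 * D + 1) * lam * c + D * (D + 1) * I1 with hB
  have hφle : ∀ t : ℝ, c * lam * G t + D * Hh t ≤ B := by
    intro t
    have e1 : c * lam * G t ≤ c * lam * (1 + D) :=
      mul_le_mul_of_nonneg_left (hsupG t) (mul_nonneg hc0 hlam0')
    have e2 : D * Hh t ≤ D * ((1 + D) * I1 + c * lam) :=
      mul_le_mul_of_nonneg_left (hsupH t) hD0
    have e3 : c * lam * (1 + D) + D * ((1 + D) * I1 + c * lam) = B := by rw [hB]; ring
    linarith
  have hkeyΦ : ∀ v u : ℝ, v ≤ u → |Φ u - Φ v| ≤ B * (u - v) + K0 * (u - v)^2 := by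
    intro v u hvu
    have h1 := hkey2 f hcf hfbound v u hvu
    have h2 : (c * lam * G v + D * (∑ i ∈ Finset.range dn, |f (S (v + i))| * g (v + i))) * (u - v)
        ≤ B * (u - v) := by
      apply mul_le_mul_of_nonneg_right _ (by linarith : (0:ℝ) ≤ u - v)
      have h3 := hφle v
      simp only [hHh] at h3
      exact h3
    have e5 : Φ u - Φ v = (∑ i ∈ Finset.range dn, f (S (u + i)) * g (u + i))
        - ∑ i ∈ Finset.range dn, f (S (v + i)) * g (v + i) := by
      simp only [hΦ, hq]
    rw [e5]
    linarith
  have hΦint := key_integral Φ (fun _ => B) continuous_const 0 K0 le_rfl hK00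
      (fun a b => by simp) (fun v u hvu => hkeyΦ v u hvu)
  have hΦlip : ∀ a b : ℝ, |Φ a - Φ b| ≤ B * |a - b| := by
    intro a b
    rcases le_total b a with h | h
    · have h1 := hΦint b a h
      rw [intervalIntegral.integral_const, smul_eq_mul] at h1
      rw [abs_of_nonneg (by linarith : (0:ℝ) ≤ a - b)]
      calc |Φ a - Φ b| ≤ (a - b) * B := h1
      _ = B * (a - b) := mul_comm _ _
    · have h1 := hΦint a b h
      rw [intervalIntegral.integral_const, smul_eq_mul] at h1
      rw [abs_sub_comm (Φ a) (Φ b), abs_sub_comm a b, abs_of_nonneg (by linarith : (0:ℝ) ≤ b - a)]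
      calc |Φ b - Φ a| ≤ (b - a) * B := h1
      _ = B * (b - a) := mul_comm _ _
  have hB0 : 0 ≤ B := by
    rw [hB]
    have t1 : 0 ≤ (2*D+1)*lam*c := mul_nonneg (mul_nonneg (by linarith) hlam0') hc0
    have t2 : 0 ≤ D*(D+1)*I1 := mul_nonneg (mul_nonneg hD0 (by linarith)) hI10
    linarith
  have hLfeq : L f = Φ := funext hLx
  rw [hLfeq]
  exact csInf_le ⟨0, fun y hy => hy.1⟩ ⟨hB0, hΦlip⟩





/-- Lip–L¹ Lasota–Yorke inequality for a `C²` expanding map `T` of the circle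
`ℝ/ℤ` (represented by a lift `T : ℝ → ℝ` with `T (x+1) = T x + d`), with
`|T'| > 1`, distortion `|T''/(T')²| ≤ D` and `λ = sup_x 1/|T'(x)|`:
for every Lipschitz (1-periodic) `f`,
`Lip(L f) ≤ (2D+1) λ Lip(f) + D(D+1) ‖f‖_{L¹}`, where
`(L f)(x) = Σ_{y : T(y) = x mod 1, y ∈ [0,1)} f(y)/|T'(y)|` is the transfer
operator (a finite sum since `T` is an expanding covering map). -/
theorem lip_L1_lasota_yorke_circle
    (T : ℝ → ℝ) (d : ℤ)
    (hTlift : ∀ x, T (x + 1) = T x + d)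
    (hTC2 : ContDiff ℝ 2 T)
    (hTexp : ∀ x, 1 < |deriv T x|)
    (D : ℝ)
    (hTdist : ∀ x, |deriv (deriv T) x / (deriv T x) ^ 2| ≤ D)
    (lam : ℝ) (hlam : lam = ⨆ x : ℝ, 1 / |deriv T x|)
    (hfin : ∀ x : ℝ, {y : ℝ | y ∈ Ico (0 : ℝ) 1 ∧ ∃ n : ℤ, T y = x + n}.Finite)
    (L : (ℝ → ℝ) → ℝ → ℝ)
    (hL : ∀ f x, L f x =
      ∑ᶠ y ∈ {y : ℝ | y ∈ Ico (0 : ℝ) 1 ∧ ∃ n : ℤ, T y = x + n}, f y / |deriv T y|)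
    (f : ℝ → ℝ)
    (hfper : Function.Periodic f 1)
    (hfLip : ∃ c : ℝ, 0 ≤ c ∧ ∀ x y, |f x - f y| ≤ c * |x - y|) :
    lipConst (L f) ≤
      (2 * D + 1) * lam * lipConst f + D * (D + 1) * ∫ x in Ico (0 : ℝ) 1, |f x| := by
  have hT'cont : Continuous (deriv T) := hTC2.continuous_deriv one_le_two
  by_cases hpos : ∀ x, 1 < deriv T x
  · exact main_inc T d hTlift hTC2 hTexp D hTdist lam hlam L hL f hfper hfLip hpos
  · push_neg at hpos
    obtain ⟨a, ha⟩ := hpos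
    have ha' : deriv T a < -1 := by
      rcases lt_abs.1 (hTexp a) with h | h
      · linarith
      · linarith
    have hneg : ∀ x, deriv T x < -1 := by
      intro x
      by_contra hx
      push_neg at hx
      have hx' : 1 < deriv T x := by
        rcases lt_abs.1 (hTexp x) with h | h
        · exact h
        · linarith
      have h0 : (0:ℝ) ∈ Set.uIcc (deriv T a) (deriv T x) := by
        rw [Set.mem_uIcc]
        left; constructor <;> linarith
      obtain ⟨z, _, hz⟩ := intermediate_value_uIcc (hT'cont.continuousOn) h0
      have := hTexp z
      rw [hz] at this
      simp at this
      linarith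
    -- transport to -T
    set T2 : ℝ → ℝ := fun x => -T x with hT2
    have hderiv2 : ∀ x, deriv T2 x = -deriv T x := fun x => deriv.neg
    have hT2lift : ∀ x, T2 (x + 1) = T2 x + ((-d : ℤ) : ℝ) := by
      intro x
      simp only [hT2, hTlift x]
      push_cast
      ring
    have hT2C2 : ContDiff ℝ 2 T2 := hTC2.neg
    have hT2exp : ∀ x, 1 < |deriv T2 x| := by
      intro x; rw [hderiv2, abs_neg]; exact hTexp x
    have hT2dist : ∀ x, |deriv (deriv T2) x / (deriv T2 x) ^ 2| ≤ D := by
      intro x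
      have e1 : deriv T2 = fun y => -deriv T y := funext (fun y => hderiv2 y)
      rw [e1]
      have e2 : deriv (fun y => -deriv T y) x = -deriv (deriv T) x := deriv.neg
      rw [e2, neg_div, abs_neg, neg_sq]
      exact hTdist x
    have hlam2 : lam = ⨆ x : ℝ, 1 / |deriv T2 x| := by
      rw [hlam]
      congr 1
      funext x
      rw [hderiv2, abs_neg]
    set L2 : (ℝ → ℝ) → ℝ → ℝ := fun f x => L f (-x) with hL2def
    have setEq : ∀ x : ℝ, {y : ℝ | y ∈ Ico (0 : ℝ) 1 ∧ ∃ n : ℤ, T y = -x + n}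
        = {y : ℝ | y ∈ Ico (0 : ℝ) 1 ∧ ∃ n : ℤ, T2 y = x + n} := by
      intro x
      ext y
      simp only [Set.mem_setOf_eq, hT2]
      constructor
      · rintro ⟨hy, n, hn⟩
        exact ⟨hy, -n, by push_cast; linarith⟩
      · rintro ⟨hy, n, hn⟩
        exact ⟨hy, -n, by push_cast; linarith⟩
    have hL2 : ∀ f x, L2 f x =
        ∑ᶠ y ∈ {y : ℝ | y ∈ Ico (0 : ℝ) 1 ∧ ∃ n : ℤ, T2 y = x + n}, f y / |deriv T2 y| := by
      intro f x
      rw [hL2def]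
      simp only
      rw [hL f (-x)]
      exact finsum_mem_congr (setEq x) (fun y _ => by rw [hderiv2, abs_neg])
    have hinc2 : ∀ x, 1 < deriv T2 x := by
      intro x; rw [hderiv2]; linarith [hneg x]
    have key := main_inc T2 (-d) hT2lift hT2C2 hT2exp D hT2dist lam hlam2 L2 hL2 f hfper hfLip hinc2
    have hlipeq : lipConst (L f) = lipConst (L2 f) := by
      unfold lipConst
      congr 1
      ext C
      simp only [Set.mem_setOf_eq]
      constructor
      · rintro ⟨hC0, hC⟩
        refine ⟨hC0, fun x y => ?_⟩
        rw [hL2def]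
        simp only
        have := hC (-x) (-y)
        rwa [show |(-x) - (-y)| = |x - y| by rw [← abs_neg]; congr 1; ring] at this
      · rintro ⟨hC0, hC⟩
        refine ⟨hC0, fun x y => ?_⟩
        have := hC (-x) (-y)
        rw [hL2def] at this
        simp only [neg_neg] at this
        rwa [show |(-x) - (-y)| = |x - y| by rw [← abs_neg]; congr 1; ring] at this
    rw [hlipeq]
    exact key
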